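/- For every b ≥ 1 and every d ∈ {1, …, D}, the Bellman value function satisfies J(b, 1) = Cd + J(b−1, D) + δ(b, 1), and J(b, d) = J(b, d−1) + δ(b, d) for every d ∈ {2, …, D}. -/

import Mathlib

private lemma inf'_add_const (P : Finset ℝ) (hP : P.Nonempty) (c : ℝ) (f : ℝ → ℝ) :
    P.inf' hP (fun p => c + f p) = c + P.inf' hP f := by
  apply le_antisymm
  · obtain ⟨p0, hp0, hm⟩ := P.exists_mem_eq_inf' hP f
    rw [hm]
    exact Finset.inf'_le _ hp0
  · exact Finset.le_inf' _ _ fun p hp => add_le_add_right (Finset.inf'_le f hp) c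

/-- Reformulation of the Bellman equation: for every backlog `b ≥ 1`,
`J(b,1) = Cd + J(b-1,D) + δ(b,1)` and `J(b,d) = J(b,d-1) + δ(b,d)` for
`d ∈ {2,…,D}`. -/
theorem bellman_reformulation
    (P : Finset ℝ) (hP : P.Nonempty) (hPnn : ∀ p ∈ P, (0:ℝ) ≤ p)
    (Cp : ℝ → ℝ) (hCp : Monotone Cp) (hCp0 : ∀ p, 0 ≤ Cp p)
    (Cb : ℕ → ℝ) (hCb : Monotone Cb) (hCb0 : ∀ b, 0 ≤ Cb b)
    (Cd : ℝ) (hCd : 0 ≤ Cd)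
    (s : ℝ → ℝ) (hs : Monotone s) (hs0 : ∀ p, 0 ≤ s p) (hs1 : ∀ p, s p ≤ 1)
    (δ : ℕ → ℕ → ℝ)
    (hδ : ∀ b d, 1 ≤ d → δ b d =
      Cb b + P.inf' hP (fun p => Cp p - s p * (Cd + ∑ k ∈ Finset.Icc 1 (d-1), δ b k)))
    (D : ℕ) (hD : 1 ≤ D)
    (J : ℕ → ℕ → ℝ)
    (hJ0 : ∀ d, J 0 d = 0)
    (hJ : ∀ b d, 1 ≤ b → 1 ≤ d → d ≤ D → J b d =
      P.inf' hP (fun p => Cb b + Cp p + s p * J (b-1) D +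
        (1 - s p) * (if d = 1 then Cd + J (b-1) D else J b (d-1)))) :
    ∀ b : ℕ, 1 ≤ b →
      J b 1 = Cd + J (b-1) D + δ b 1 ∧
      ∀ d : ℕ, 2 ≤ d → d ≤ D → J b d = J b (d-1) + δ b d := by
  intro b hb
  have key : ∀ d, 1 ≤ d → d ≤ D →
      J b d = (if d = 1 then Cd + J (b-1) D else J b (d-1)) + δ b d ∧
      J b d = J (b-1) D + (Cd + ∑ k ∈ Finset.Icc 1 d, δ b k) := by
    intro d
    induction d using Nat.strong_induction_on with
    | _ d ih =>
      intro hd1 hdD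
      have hBA : (if d = 1 then Cd + J (b-1) D else J b (d-1)) - J (b-1) D
          = Cd + ∑ k ∈ Finset.Icc 1 (d-1), δ b k := by
        rcases eq_or_lt_of_le hd1 with h1 | h2
        · simp [← h1]
        · have h2' : 2 ≤ d := h2
          have hprev := (ih (d-1) (by omega) (by omega) (by omega)).2
          rw [if_neg (by omega), hprev]; ring
      have hfun : ∀ p ∈ P, Cb b + Cp p + s p * J (b-1) D +
          (1 - s p) * (if d = 1 then Cd + J (b-1) D else J b (d-1))
          = (Cb b + (if d = 1 then Cd + J (b-1) D else J b (d-1)))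
            + (Cp p - s p * (Cd + ∑ k ∈ Finset.Icc 1 (d-1), δ b k)) := by
        intro p _
        rw [← hBA]; ring
      have hJd : J b d = (if d = 1 then Cd + J (b-1) D else J b (d-1)) + δ b d := by
        rw [hJ b d hb hd1 hdD, Finset.inf'_congr hP rfl hfun, inf'_add_const,
          hδ b d hd1]
        ring
      refine ⟨hJd, ?_⟩
      have hsum : ∑ k ∈ Finset.Icc 1 d, δ b k
          = (∑ k ∈ Finset.Icc 1 (d-1), δ b k) + δ b d := by
        have hd : d - 1 + 1 = d := by omega
        rw [← hd, Finset.sum_Icc_succ_top (by omega)]; simp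
      rw [hJd, hsum]
      have := hBA
      linarith
  refine ⟨?_, ?_⟩
  · have h := (key 1 le_rfl hD).1
    simpa using h
  · intro d hd2 hdD
    have h := (key d (by omega) hdD).1
    rwa [if_neg (by omega)] at h
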